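/- Let q_i, q_j be probability vectors in R^K whose maxima are attained at distinct indices r ≠ o (with q_i(r) = max q_i and q_j(o) = max q_j). If q_i^T q_j ≥ ζ (so that q_i(r) ≥ ζ and q_j(o) ≥ ζ), then q_i^T q_j ≤ 2(1 − ζ). -/
import Mathlib


theorem stmt2 (K : ℕ) (qi qj : Fin K → ℝ) (ζ : ℝ) (hζ0 : 0 ≤ ζ) (hζ1 : ζ ≤ 1)
    (hi0 : ∀ l, 0 ≤ qi l) (hj0 : ∀ l, 0 ≤ qj l)
    (hi1 : ∑ l, qi l = 1) (hj1 : ∑ l, qj l = 1)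
    (r o : Fin K) (hro : r ≠ o)
    (hr : ∀ l, qi l ≤ qi r) (ho : ∀ l, qj l ≤ qj o)
    (hip : ζ ≤ ∑ l, qi l * qj l) :
    ∑ l, qi l * qj l ≤ 2 * (1 - ζ) := by
  have hqi1 : ∀ l, qi l ≤ 1 := by
    intro l
    calc qi l ≤ ∑ k, qi k := Finset.single_le_sum (fun k _ => hi0 k) (Finset.mem_univ l)
    _ = 1 := hi1
  have hqjo : ζ ≤ qj o := by
    calc ζ ≤ ∑ l, qi l * qj l := hip
    _ ≤ ∑ l, qi l * qj o :=
        Finset.sum_le_sum (fun l _ => mul_le_mul_of_nonneg_left (ho l) (hi0 l))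
    _ = qj o := by rw [← Finset.sum_mul, hi1, one_mul]
  have hqjr : qj r ≤ 1 - ζ := by
    have h2 : qj r + qj o ≤ 1 := by
      have := Finset.sum_le_sum_of_subset_of_nonneg
        (Finset.subset_univ ({r, o} : Finset (Fin K))) (fun l _ _ => hj0 l)
      rw [Finset.sum_pair hro, hj1] at this
      exact this
    linarith
  have herase : ∑ l ∈ Finset.univ.erase r, qi l = 1 - qi r := by
    have := Finset.add_sum_erase Finset.univ qi (Finset.mem_univ r)
    rw [hi1] at this
    linarith
  have hqir : ζ ≤ qi r := by
    calc ζ ≤ ∑ l, qi l * qj l := hip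
    _ ≤ ∑ l, qi r * qj l :=
        Finset.sum_le_sum (fun l _ => mul_le_mul_of_nonneg_right (hr l) (hj0 l))
    _ = qi r := by rw [← Finset.mul_sum, hj1, mul_one]
  have hsplit : ∑ l, qi l * qj l
      = qi r * qj r + ∑ l ∈ Finset.univ.erase r, qi l * qj l :=
    (Finset.add_sum_erase Finset.univ (fun l => qi l * qj l) (Finset.mem_univ r)).symm
  have h1 : qi r * qj r ≤ 1 - ζ := by
    calc qi r * qj r ≤ 1 * qj r :=
      mul_le_mul_of_nonneg_right (hqi1 r) (hj0 r)
    _ = qj r := one_mul _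
    _ ≤ 1 - ζ := hqjr
  have h2 : ∑ l ∈ Finset.univ.erase r, qi l * qj l ≤ 1 - ζ := by
    have hqj1 : ∀ l, qj l ≤ 1 := fun l => le_trans (ho l) (by
      calc qj o ≤ ∑ k, qj k := Finset.single_le_sum (fun k _ => hj0 k) (Finset.mem_univ o)
      _ = 1 := hj1)
    calc ∑ l ∈ Finset.univ.erase r, qi l * qj l
        ≤ ∑ l ∈ Finset.univ.erase r, qi l :=
          Finset.sum_le_sum (fun l _ => by
            calc qi l * qj l ≤ qi l * 1 := mul_le_mul_of_nonneg_left (hqj1 l) (hi0 l)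
            _ = qi l := mul_one _)
    _ = 1 - qi r := herase
    _ ≤ 1 - ζ := by linarith
  linarith
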